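/- Let 1 → K → G → ℤ → 1 be a short exact sequence of groups with quotient map φ : G → ℤ, and let α ∈ G with φ(α) = 1. Suppose there exist a positive integer n and an element k ∈ K such that conjugation by αⁿ and conjugation by k agree on K. Then φ⁻¹(nℤ) is isomorphic to the direct product K × ℤ; more precisely, the element β = αⁿ k⁻¹ centralizes K, has infinite order, satisfies ⟨β⟩ ∩ K = {1}, and φ⁻¹(nℤ) = K⟨β⟩. -/

import Mathlib

/-- Given 1 → K → G → ℤ → 1 with quotient map φ, α ∈ G with φ(α) = 1, and n > 0,
k ∈ K such that conjugation by αⁿ agrees with conjugation by k on K, the element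
β = αⁿ k⁻¹ centralizes K, has infinite order, meets K trivially, and
φ⁻¹(nℤ) = K⟨β⟩; hence φ⁻¹(nℤ) ≅ K × ℤ. -/
theorem stmt12 {G : Type*} [Group G] (φ : G →* Multiplicative ℤ)
    (hsurj : Function.Surjective φ) (α : G) (hα : φ α = Multiplicative.ofAdd 1)
    (n : ℕ) (hn : 0 < n) (k : G) (hk : k ∈ φ.ker)
    (hconj : ∀ x ∈ φ.ker, α ^ n * x * (α ^ n)⁻¹ = k * x * k⁻¹) :
    (∀ x ∈ φ.ker, (α ^ n * k⁻¹) * x = x * (α ^ n * k⁻¹)) ∧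
    (∀ m : ℤ, (α ^ n * k⁻¹) ^ m = 1 → m = 0) ∧
    (∀ m : ℤ, (α ^ n * k⁻¹) ^ m ∈ φ.ker → m = 0) ∧
    (∀ g : G, ((n : ℤ) ∣ Multiplicative.toAdd (φ g)) ↔
      ∃ x ∈ φ.ker, ∃ m : ℤ, g = x * (α ^ n * k⁻¹) ^ m) ∧
    Nonempty (((Subgroup.zpowers (Multiplicative.ofAdd (n : ℤ))).comap φ) ≃*
      (φ.ker × Multiplicative ℤ)) := by
  set β := α ^ n * k⁻¹ with hβ
  have hnz : (n : ℤ) ≠ 0 := by exact_mod_cast hn.ne'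
  have hφk : φ k = 1 := hk
  have hφβ : Multiplicative.toAdd (φ β) = (n : ℤ) := by
    simp [hβ, map_mul, map_pow, map_inv, hα, hφk]
  have hφβm : ∀ m : ℤ, Multiplicative.toAdd (φ (β ^ m)) = (n : ℤ) * m := by
    intro m
    rw [map_zpow, toAdd_zpow, hφβ, smul_eq_mul, mul_comm]
  -- centralizing
  have hcent : ∀ x ∈ φ.ker, β * x = x * β := by
    intro x hx
    have hx' : φ x = 1 := hx
    have h1 : k⁻¹ * x * k ∈ φ.ker := by
      simp [MonoidHom.mem_ker, map_mul, map_inv, hφk, hx']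
    have h2 := hconj _ h1
    have h3 : α ^ n * (k⁻¹ * x * k) * (α ^ n)⁻¹ = x := by
      rw [h2]; group
    calc β * x = (α ^ n * (k⁻¹ * x * k) * (α ^ n)⁻¹) * (α ^ n * k⁻¹) := by
          rw [hβ]; group
    _ = x * β := by rw [h3]
  have hcentz : ∀ x ∈ φ.ker, ∀ m : ℤ, β ^ m * x = x * β ^ m := by
    intro x hx m
    exact Commute.zpow_left (hcent x hx) m
  have hord : ∀ m : ℤ, β ^ m = 1 → m = 0 := by
    intro m hm
    have := hφβm m
    rw [hm, map_one] at this
    simpa [hnz, hn.ne', hn.ne, eq_comm] using (mul_eq_zero.mp this.symm)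
  have hker : ∀ m : ℤ, β ^ m ∈ φ.ker → m = 0 := by
    intro m hm
    have h1 : Multiplicative.toAdd (φ (β ^ m)) = 0 := by
      rw [MonoidHom.mem_ker.mp hm]; rfl
    rw [hφβm] at h1
    simpa [hnz, hn.ne'] using (mul_eq_zero.mp h1)
  have hdecomp : ∀ g : G, ((n : ℤ) ∣ Multiplicative.toAdd (φ g)) ↔
      ∃ x ∈ φ.ker, ∃ m : ℤ, g = x * β ^ m := by
    intro g
    constructor
    · rintro ⟨m, hm⟩
      refine ⟨g * β ^ (-m), ?_, m, by group⟩
      have : φ (g * β ^ (-m)) = 1 := by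
        apply Multiplicative.toAdd.injective
        rw [map_mul, toAdd_mul, hφβm, hm, toAdd_one]; ring
      exact this
    · rintro ⟨x, hx, m, rfl⟩
      refine ⟨m, ?_⟩
      rw [map_mul, toAdd_mul, MonoidHom.mem_ker.mp hx, hφβm]
      simp
  refine ⟨hcent, hord, hker, hdecomp, ?_⟩
  -- build the iso
  set H := (Subgroup.zpowers (Multiplicative.ofAdd (n : ℤ))).comap φ with hH
  have hmemH : ∀ g : G, g ∈ H ↔ (n : ℤ) ∣ Multiplicative.toAdd (φ g) := by
    intro g
    constructor
    · rintro ⟨m, hm⟩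
      exact ⟨m, by rw [← hm, toAdd_zpow]; simp [mul_comm]⟩
    · rintro ⟨m, hm⟩
      exact ⟨m, by
        have : Multiplicative.toAdd ((Multiplicative.ofAdd (n:ℤ)) ^ m) = (n:ℤ) * m := by
          rw [toAdd_zpow]; simp [mul_comm]
        apply Multiplicative.toAdd.injective
        rw [this, ← hm]⟩
  have Fmem : ∀ g : H, (g : G) * β ^ (-(Multiplicative.toAdd (φ (g : G)) / n)) ∈ φ.ker := by
    intro g
    obtain ⟨m, hm⟩ := (hmemH _).mp g.2
    have hq : (n : ℤ) * (Multiplicative.toAdd (φ (g : G)) / n) =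
        Multiplicative.toAdd (φ (g : G)) := Int.mul_ediv_cancel' ⟨m, hm⟩
    show φ _ = 1
    apply Multiplicative.toAdd.injective
    rw [map_mul, toAdd_mul, hφβm, mul_neg, hq, toAdd_one]; ring
  have Gmem : ∀ (x : φ.ker) (m : Multiplicative ℤ),
      (x : G) * β ^ (Multiplicative.toAdd m) ∈ H := by
    intro x m
    rw [hmemH, map_mul, toAdd_mul, MonoidHom.mem_ker.mp x.2, hφβm]
    simp
  have hq' : ∀ (x : φ.ker) (m : Multiplicative ℤ),
      Multiplicative.toAdd (φ ((x : G) * β ^ (Multiplicative.toAdd m))) / (n:ℤ) =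
        Multiplicative.toAdd m := by
    intro x m
    rw [map_mul, toAdd_mul, MonoidHom.mem_ker.mp x.2, hφβm]
    simpa using Int.mul_ediv_cancel_left _ hnz
  refine ⟨{
    toFun := fun g => (⟨(g : G) * β ^ (-(Multiplicative.toAdd (φ (g : G)) / n)), Fmem g⟩,
      Multiplicative.ofAdd (Multiplicative.toAdd (φ (g : G)) / n)),
    invFun := fun p => ⟨(p.1 : G) * β ^ (Multiplicative.toAdd p.2), Gmem p.1 p.2⟩,
    left_inv := ?_, right_inv := ?_, map_mul' := ?_ }⟩
  · intro g
    ext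
    simp only [toAdd_ofAdd]
    group
  · rintro ⟨x, m⟩
    have h1 := hq' x m
    ext
    · simp only [h1]
      group
    · simp only [h1]
      rfl
  · intro g₁ g₂
    obtain ⟨m₁, hm₁⟩ := (hmemH _).mp g₁.2
    obtain ⟨m₂, hm₂⟩ := (hmemH _).mp g₂.2
    set t₁ := Multiplicative.toAdd (φ (g₁ : G))
    set t₂ := Multiplicative.toAdd (φ (g₂ : G))
    have ht : Multiplicative.toAdd (φ ((g₁ : G) * (g₂ : G))) = t₁ + t₂ := by
      rw [map_mul, toAdd_mul]
    have hq1 : (n:ℤ) * (t₁ / n) = t₁ := Int.mul_ediv_cancel' ⟨m₁, hm₁⟩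
    have hq2 : (n:ℤ) * (t₂ / n) = t₂ := Int.mul_ediv_cancel' ⟨m₂, hm₂⟩
    have hsum : (t₁ + t₂) / (n:ℤ) = t₁ / n + t₂ / n := by
      rw [← hq1, ← hq2, ← mul_add]
      rw [Int.mul_ediv_cancel_left _ hnz, Int.mul_ediv_cancel_left _ hnz,
        Int.mul_ediv_cancel_left _ hnz]
    have hcomm : β ^ (-(t₁ / (n:ℤ))) * ((g₂ : G) * β ^ (-(t₂ / (n:ℤ)))) =
        ((g₂ : G) * β ^ (-(t₂ / (n:ℤ)))) * β ^ (-(t₁ / (n:ℤ))) := by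
      exact hcentz _ (Fmem g₂) _
    ext
    · show ((g₁ : G) * (g₂ : G)) * β ^ (-(Multiplicative.toAdd (φ ((g₁ : G) * (g₂:G))) / (n:ℤ)))
        = ((g₁ : G) * β ^ (-(t₁ / (n:ℤ)))) * ((g₂ : G) * β ^ (-(t₂ / (n:ℤ))))
      rw [ht, hsum]
      have e1 : β ^ (-(t₁ / (n:ℤ) + t₂ / (n:ℤ))) =
          β ^ (-(t₂ / (n:ℤ))) * β ^ (-(t₁ / (n:ℤ))) := by
        rw [← zpow_add, neg_add, add_comm]
      calc (g₁ : G) * (g₂ : G) * β ^ (-(t₁ / (n:ℤ) + t₂ / (n:ℤ)))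
          = (g₁ : G) * (((g₂ : G) * β ^ (-(t₂ / (n:ℤ)))) * β ^ (-(t₁ / (n:ℤ)))) := by
            simp only [e1, mul_assoc]
        _ = (g₁ : G) * (β ^ (-(t₁ / (n:ℤ))) * ((g₂ : G) * β ^ (-(t₂ / (n:ℤ))))) := by
            rw [hcomm]
        _ = ((g₁ : G) * β ^ (-(t₁ / (n:ℤ)))) * ((g₂ : G) * β ^ (-(t₂ / (n:ℤ)))) := by
            rw [mul_assoc]
    · show Multiplicative.ofAdd (Multiplicative.toAdd (φ ((g₁:G) * (g₂:G))) / (n:ℤ)) =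
        Multiplicative.ofAdd (t₁ / (n:ℤ)) * Multiplicative.ofAdd (t₂ / (n:ℤ))
      rw [ht, hsum, ofAdd_add]
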